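/- For finite random variables W1, W2, S^n, Y^n with W1, W2, S^n mutually independent, W1 uniform on M1 values, and X^n a deterministic function of (W1, W2, S^n), in a memoryless channel Y_j depending only on (X_j, S_j): H(W1) ≤ Σ_{j=1}^n I(X_j ; Y_j | S_j, U_j) + n·ε_n, where U_j := (W2, S^{j−1}, S_{j+1}^n) and n·ε_n bounds H(W1 | W2, S^n, Y^n) via Fano's inequality. -/

import Mathlib

open scoped BigOperators

set_option synthInstance.maxSize 2048
set_option linter.unusedSectionVars false
set_option maxHeartbeats 1000000

namespace IE

variable {Ω : Type*} [Fintype Ω]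

/-- Probability that the random variable `X` takes the value `x`, under pmf `p`. -/
noncomputable def pr {α : Type*} [DecidableEq α] (p : Ω → ℝ) (X : Ω → α) (x : α) : ℝ :=
  ∑ ω : Ω, if X ω = x then p ω else 0

/-- Shannon entropy (base 2) of a random variable. -/
noncomputable def ent {α : Type*} [Fintype α] [DecidableEq α] (p : Ω → ℝ) (X : Ω → α) : ℝ :=
  -∑ x : α, pr p X x * Real.logb 2 (pr p X x)

/-- Conditional entropy H(X | Z). -/
noncomputable def cent {α β : Type*} [Fintype α] [DecidableEq α] [Fintype β] [DecidableEq β]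
    (p : Ω → ℝ) (X : Ω → α) (Z : Ω → β) : ℝ :=
  ent p (fun ω => (X ω, Z ω)) - ent p Z

/-- Mutual information I(X ; Y). -/
noncomputable def mi {α β : Type*} [Fintype α] [DecidableEq α] [Fintype β] [DecidableEq β]
    (p : Ω → ℝ) (X : Ω → α) (Y : Ω → β) : ℝ :=
  ent p X + ent p Y - ent p (fun ω => (X ω, Y ω))

/-- Conditional mutual information I(X ; Y | Z). -/
noncomputable def cmi {α β γ : Type*} [Fintype α] [DecidableEq α] [Fintype β] [DecidableEq β]
    [Fintype γ] [DecidableEq γ] (p : Ω → ℝ) (X : Ω → α) (Y : Ω → β) (Z : Ω → γ) : ℝ :=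
  ent p (fun ω => (X ω, Z ω)) + ent p (fun ω => (Y ω, Z ω))
    - ent p (fun ω => (X ω, Y ω, Z ω)) - ent p Z

/-- `p` is a probability mass function on `Ω`. -/
def IsPMF (p : Ω → ℝ) : Prop := (∀ ω, 0 ≤ p ω) ∧ ∑ ω : Ω, p ω = 1

/-! ### Basic library -/

section Lib
variable {α β γ δ : Type*} [DecidableEq α] [DecidableEq β] [DecidableEq γ] [DecidableEq δ]

lemma pr_nonneg' (p : Ω → ℝ) (h0 : ∀ ω, 0 ≤ p ω) (X : Ω → α) (x : α) : 0 ≤ pr p X x := by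
  apply Finset.sum_nonneg; intro ω _; split <;> simp [h0 ω]

lemma sum_pr' [Fintype α] (p : Ω → ℝ) (X : Ω → α) : ∑ x : α, pr p X x = ∑ ω : Ω, p ω := by
  unfold pr
  rw [Finset.sum_comm]
  apply Finset.sum_congr rfl; intro ω _
  simp

lemma pr_comp [Fintype α] (p : Ω → ℝ) (g : α → β) (X : Ω → α) (t : β) :
    pr p (fun ω => g (X ω)) t = ∑ u : α, if g u = t then pr p X u else 0 := by
  unfold pr
  have h1 : ∀ u : α, (if g u = t then ∑ ω : Ω, if X ω = u then p ω else 0 else 0)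
      = ∑ ω : Ω, if X ω = u then (if g u = t then p ω else 0) else 0 := by
    intro u; split
    · rfl
    · simp
  rw [Finset.sum_congr rfl (fun u _ => h1 u), Finset.sum_comm]
  apply Finset.sum_congr rfl; intro ω _
  have h2 : ∀ u : α, (if X ω = u then (if g u = t then p ω else 0) else 0)
      = if u = X ω then (if g u = t then p ω else 0) else 0 := by
    intro u; simp [eq_comm]
  rw [Finset.sum_congr rfl (fun u _ => h2 u), Finset.sum_ite_eq' Finset.univ (X ω)]
  simp

lemma pr_comp_eq (p : Ω → ℝ) {g : α → β} (hg : Function.Injective g) (X : Ω → α) (x : α) :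
    pr p (fun ω => g (X ω)) (g x) = pr p X x := by
  unfold pr; apply Finset.sum_congr rfl; intro ω _
  simp [hg.eq_iff]

lemma pr_comp_zero (p : Ω → ℝ) {g : α → β} (X : Ω → α) {t : β}
    (ht : ∀ x, g x ≠ t) : pr p (fun ω => g (X ω)) t = 0 := by
  unfold pr; apply Finset.sum_eq_zero; intro ω _
  simp [ht (X ω)]

lemma ent_congr [Fintype α] [Fintype β] (p : Ω → ℝ) (g : α → β) (g' : β → α)
    (hg : ∀ a, g' (g a) = a) (X : Ω → α) (Y : Ω → β) (hY : ∀ ω, Y ω = g (X ω)) :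
    ent p Y = ent p X := by
  have hginj : Function.Injective g := Function.LeftInverse.injective hg
  have hYe : Y = fun ω => g (X ω) := funext hY
  subst hYe
  unfold ent
  congr 1
  have himg : ∑ y ∈ Finset.univ.image g,
        pr p (fun ω => g (X ω)) y * Real.logb 2 (pr p (fun ω => g (X ω)) y)
      = ∑ x : α, pr p (fun ω => g (X ω)) (g x) * Real.logb 2 (pr p (fun ω => g (X ω)) (g x)) :=
    Finset.sum_image (fun a _ b _ h => hginj h)
  rw [← Finset.sum_subset (Finset.subset_univ (Finset.univ.image g))]
  · rw [himg]
    apply Finset.sum_congr rfl; intro x _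
    rw [pr_comp_eq p hginj]
  · intro y _ hy
    have hz : ∀ x, g x ≠ y := by
      intro x hx; exact hy (Finset.mem_image.mpr ⟨x, Finset.mem_univ x, hx⟩)
    rw [pr_comp_zero p X hz]; ring

lemma pr_pair_snd [Fintype α] (p : Ω → ℝ) (A : Ω → α) (C : Ω → γ) (c : γ) :
    pr p C c = ∑ a : α, pr p (fun ω => (A ω, C ω)) (a, c) := by
  unfold pr
  rw [Finset.sum_comm]
  apply Finset.sum_congr rfl; intro ω _
  have h : ∀ a : α, (if (A ω, C ω) = (a, c) then p ω else 0)
      = if A ω = a then (if C ω = c then p ω else 0) else 0 := by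
    intro a; by_cases ha : A ω = a <;> simp [Prod.ext_iff, ha]
  rw [Finset.sum_congr rfl (fun a _ => h a), Finset.sum_ite_eq Finset.univ (A ω)]
  simp

lemma pr_triple_b [Fintype β] (p : Ω → ℝ) (A : Ω → α) (B : Ω → β) (C : Ω → γ) (a : α) (c : γ) :
    pr p (fun ω => (A ω, C ω)) (a, c) = ∑ b : β, pr p (fun ω => (A ω, B ω, C ω)) (a, b, c) := by
  unfold pr
  rw [Finset.sum_comm]
  apply Finset.sum_congr rfl; intro ω _
  have h : ∀ b : β, (if (A ω, B ω, C ω) = (a, b, c) then p ω else 0)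
      = if B ω = b then (if (A ω, C ω) = (a, c) then p ω else 0) else 0 := by
    intro b; by_cases hb : B ω = b <;> simp [Prod.ext_iff, hb]
  rw [Finset.sum_congr rfl (fun b _ => h b), Finset.sum_ite_eq Finset.univ (B ω)]
  simp

lemma pr_triple_a [Fintype α] (p : Ω → ℝ) (A : Ω → α) (B : Ω → β) (C : Ω → γ) (b : β) (c : γ) :
    pr p (fun ω => (B ω, C ω)) (b, c) = ∑ a : α, pr p (fun ω => (A ω, B ω, C ω)) (a, b, c) := by
  unfold pr
  rw [Finset.sum_comm]
  apply Finset.sum_congr rfl; intro ω _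
  have h : ∀ a : α, (if (A ω, B ω, C ω) = (a, b, c) then p ω else 0)
      = if A ω = a then (if (B ω, C ω) = (b, c) then p ω else 0) else 0 := by
    intro a; by_cases ha : A ω = a <;> simp [Prod.ext_iff, ha]
  rw [Finset.sum_congr rfl (fun a _ => h a), Finset.sum_ite_eq Finset.univ (A ω)]
  simp

lemma pr_triple_c [Fintype α] [Fintype β] (p : Ω → ℝ) (A : Ω → α) (B : Ω → β) (C : Ω → γ)
    (c : γ) :
    pr p C c = ∑ a : α, ∑ b : β, pr p (fun ω => (A ω, B ω, C ω)) (a, b, c) := by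
  rw [pr_pair_snd p A C c]
  exact Finset.sum_congr rfl (fun a _ => pr_triple_b p A B C a c)

end Lib


section Core
variable {Ω : Type*} [Fintype Ω]
variable {α β γ δ : Type*} [DecidableEq α] [DecidableEq β] [DecidableEq γ]
variable (p : Ω → ℝ) (A : Ω → α) (B : Ω → β) (C : Ω → γ)

lemma cmi_eq_sum [Fintype α] [Fintype β] [Fintype γ] :
    cmi p A B C = ∑ a : α, ∑ b : β, ∑ c : γ,
      pr p (fun ω => (A ω, B ω, C ω)) (a, b, c) *
        (Real.logb 2 (pr p (fun ω => (A ω, B ω, C ω)) (a, b, c))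
          + Real.logb 2 (pr p C c)
          - Real.logb 2 (pr p (fun ω => (A ω, C ω)) (a, c))
          - Real.logb 2 (pr p (fun ω => (B ω, C ω)) (b, c))) := by
  set q := fun (a : α) (b : β) (c : γ) => pr p (fun ω => (A ω, B ω, C ω)) (a, b, c) with hq
  have e1 : ent p (fun ω => (A ω, C ω))
      = -∑ a : α, ∑ b : β, ∑ c : γ, q a b c * Real.logb 2 (pr p (fun ω => (A ω, C ω)) (a, c)) := by
    unfold ent; congr 1
    rw [Fintype.sum_prod_type]
    refine Finset.sum_congr rfl fun a _ => ?_
    rw [Finset.sum_comm]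
    refine Finset.sum_congr rfl fun c _ => ?_
    rw [pr_triple_b p A B C a c, Finset.sum_mul]
  have e2 : ent p (fun ω => (B ω, C ω))
      = -∑ a : α, ∑ b : β, ∑ c : γ, q a b c * Real.logb 2 (pr p (fun ω => (B ω, C ω)) (b, c)) := by
    unfold ent; congr 1
    rw [Fintype.sum_prod_type]
    have h1 : ∀ b : β, ∀ c : γ, pr p (fun ω => (B ω, C ω)) (b, c) * Real.logb 2 (pr p (fun ω => (B ω, C ω)) (b, c))
        = ∑ a : α, q a b c * Real.logb 2 (pr p (fun ω => (B ω, C ω)) (b, c)) := by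
      intro b c; rw [pr_triple_a p A B C b c, Finset.sum_mul]
    calc ∑ b : β, ∑ c : γ, pr p (fun ω => (B ω, C ω)) (b, c) * Real.logb 2 (pr p (fun ω => (B ω, C ω)) (b, c))
        = ∑ b : β, ∑ c : γ, ∑ a : α, q a b c * Real.logb 2 (pr p (fun ω => (B ω, C ω)) (b, c)) := by
          exact Finset.sum_congr rfl fun b _ => Finset.sum_congr rfl fun c _ => h1 b c
      _ = ∑ b : β, ∑ a : α, ∑ c : γ, q a b c * Real.logb 2 (pr p (fun ω => (B ω, C ω)) (b, c)) := by
          exact Finset.sum_congr rfl fun b _ => Finset.sum_comm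
      _ = ∑ a : α, ∑ b : β, ∑ c : γ, q a b c * Real.logb 2 (pr p (fun ω => (B ω, C ω)) (b, c)) :=
          Finset.sum_comm
  have e3 : ent p (fun ω => (A ω, B ω, C ω))
      = -∑ a : α, ∑ b : β, ∑ c : γ, q a b c * Real.logb 2 (q a b c) := by
    unfold ent; congr 1
    rw [Fintype.sum_prod_type]
    refine Finset.sum_congr rfl fun a _ => ?_
    rw [Fintype.sum_prod_type]
  have e4 : ent p C
      = -∑ a : α, ∑ b : β, ∑ c : γ, q a b c * Real.logb 2 (pr p C c) := by
    unfold ent; congr 1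
    have h1 : ∀ c : γ, pr p C c * Real.logb 2 (pr p C c)
        = ∑ a : α, ∑ b : β, q a b c * Real.logb 2 (pr p C c) := by
      intro c
      rw [pr_triple_c p A B C c, Finset.sum_mul]
      exact Finset.sum_congr rfl fun a _ => by rw [Finset.sum_mul]
    calc ∑ c : γ, pr p C c * Real.logb 2 (pr p C c)
        = ∑ c : γ, ∑ a : α, ∑ b : β, q a b c * Real.logb 2 (pr p C c) :=
          Finset.sum_congr rfl fun c _ => h1 c
      _ = ∑ a : α, ∑ c : γ, ∑ b : β, q a b c * Real.logb 2 (pr p C c) := Finset.sum_comm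
      _ = ∑ a : α, ∑ b : β, ∑ c : γ, q a b c * Real.logb 2 (pr p C c) :=
          Finset.sum_congr rfl fun a _ => Finset.sum_comm
  unfold cmi
  rw [e1, e2, e3, e4]
  simp only [mul_add, mul_sub, Finset.sum_add_distrib, Finset.sum_sub_distrib]
  ring

lemma triple_le_AC [Fintype β] (h0 : ∀ ω, 0 ≤ p ω) (a : α) (b : β) (c : γ) :
    pr p (fun ω => (A ω, B ω, C ω)) (a, b, c) ≤ pr p (fun ω => (A ω, C ω)) (a, c) := by
  rw [pr_triple_b p A B C a c]
  exact Finset.single_le_sum (f := fun b' : β => pr p (fun ω => (A ω, B ω, C ω)) (a, b', c))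
    (fun b' _ => pr_nonneg' p h0 _ _) (Finset.mem_univ b)

lemma triple_le_BC [Fintype α] (h0 : ∀ ω, 0 ≤ p ω) (a : α) (b : β) (c : γ) :
    pr p (fun ω => (A ω, B ω, C ω)) (a, b, c) ≤ pr p (fun ω => (B ω, C ω)) (b, c) := by
  rw [pr_triple_a p A B C b c]
  exact Finset.single_le_sum (f := fun a' : α => pr p (fun ω => (A ω, B ω, C ω)) (a', b, c))
    (fun a' _ => pr_nonneg' p h0 _ _) (Finset.mem_univ a)

lemma pair_le_C [Fintype α] (h0 : ∀ ω, 0 ≤ p ω) (a : α) (c : γ) :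
    pr p (fun ω => (A ω, C ω)) (a, c) ≤ pr p C c := by
  rw [pr_pair_snd p A C c]
  exact Finset.single_le_sum (f := fun a' : α => pr p (fun ω => (A ω, C ω)) (a', c))
    (fun a' _ => pr_nonneg' p h0 _ _) (Finset.mem_univ a)

lemma cmi_eq_zero_of_factor [Fintype α] [Fintype β] [Fintype γ]
    (h0 : ∀ ω, 0 ≤ p ω)
    (h : ∀ a b c, pr p (fun ω => (A ω, B ω, C ω)) (a, b, c) * pr p C c
      = pr p (fun ω => (A ω, C ω)) (a, c) * pr p (fun ω => (B ω, C ω)) (b, c)) :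
    cmi p A B C = 0 := by
  rw [cmi_eq_sum]
  apply Finset.sum_eq_zero; intro a _
  apply Finset.sum_eq_zero; intro b _
  apply Finset.sum_eq_zero; intro c _
  rcases eq_or_lt_of_le (pr_nonneg' p h0 (fun ω => (A ω, B ω, C ω)) (a, b, c)) with hq | hq
  · rw [← hq, zero_mul]
  · have hAC : 0 < pr p (fun ω => (A ω, C ω)) (a, c) :=
      lt_of_lt_of_le hq (triple_le_AC p A B C h0 a b c)
    have hBC : 0 < pr p (fun ω => (B ω, C ω)) (b, c) :=
      lt_of_lt_of_le hq (triple_le_BC p A B C h0 a b c)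
    have hC : 0 < pr p C c := lt_of_lt_of_le hAC (pair_le_C p A C h0 a c)
    have key : Real.logb 2 (pr p (fun ω => (A ω, B ω, C ω)) (a, b, c)) + Real.logb 2 (pr p C c)
        - Real.logb 2 (pr p (fun ω => (A ω, C ω)) (a, c))
        - Real.logb 2 (pr p (fun ω => (B ω, C ω)) (b, c)) = 0 := by
      rw [← Real.logb_mul (ne_of_gt hq) (ne_of_gt hC), sub_sub,
        ← Real.logb_mul (ne_of_gt hAC) (ne_of_gt hBC), h a b c, sub_self]
    rw [key, mul_zero]

lemma cmi_nonneg [Fintype α] [Fintype β] [Fintype γ]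
    (hp : (∀ ω, 0 ≤ p ω) ∧ ∑ ω : Ω, p ω = 1) :
    0 ≤ cmi p A B C := by
  obtain ⟨h0, h1⟩ := hp
  rw [cmi_eq_sum]
  have hlog2 : (0:ℝ) < Real.log 2 := Real.log_pos (by norm_num)
  have key : ∀ a b c, (pr p (fun ω => (A ω, B ω, C ω)) (a, b, c)
        - pr p (fun ω => (A ω, C ω)) (a, c) * pr p (fun ω => (B ω, C ω)) (b, c) / pr p C c)
        / Real.log 2
      ≤ pr p (fun ω => (A ω, B ω, C ω)) (a, b, c) *
        (Real.logb 2 (pr p (fun ω => (A ω, B ω, C ω)) (a, b, c))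
          + Real.logb 2 (pr p C c)
          - Real.logb 2 (pr p (fun ω => (A ω, C ω)) (a, c))
          - Real.logb 2 (pr p (fun ω => (B ω, C ω)) (b, c))) := by
    intro a b c
    rcases eq_or_lt_of_le (pr_nonneg' p h0 (fun ω => (A ω, B ω, C ω)) (a, b, c)) with hq | hq
    · rw [← hq, zero_mul, zero_sub]
      apply div_nonpos_of_nonpos_of_nonneg _ (le_of_lt hlog2)
      rw [neg_nonpos]
      rcases eq_or_ne (pr p C c) 0 with hC | hC
      · rw [hC, div_zero]
      · apply div_nonneg (mul_nonneg (pr_nonneg' p h0 _ _) (pr_nonneg' p h0 _ _))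
          (pr_nonneg' p h0 _ _)
    · have hAC : 0 < pr p (fun ω => (A ω, C ω)) (a, c) :=
        lt_of_lt_of_le hq (triple_le_AC p A B C h0 a b c)
      have hBC : 0 < pr p (fun ω => (B ω, C ω)) (b, c) :=
        lt_of_lt_of_le hq (triple_le_BC p A B C h0 a b c)
      have hC : 0 < pr p C c := lt_of_lt_of_le hAC (pair_le_C p A C h0 a c)
      set Q := pr p (fun ω => (A ω, B ω, C ω)) (a, b, c)
      set FA := pr p (fun ω => (A ω, C ω)) (a, c)
      set FB := pr p (fun ω => (B ω, C ω)) (b, c)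
      set FC := pr p C c
      have ht : 0 < Q * FC / (FA * FB) := by positivity
      have hbr : Real.logb 2 Q + Real.logb 2 FC - Real.logb 2 FA - Real.logb 2 FB
          = Real.log (Q * FC / (FA * FB)) / Real.log 2 := by
        unfold Real.logb
        rw [Real.log_div (by positivity) (by positivity),
          Real.log_mul (ne_of_gt hq) (ne_of_gt hC),
          Real.log_mul (ne_of_gt hAC) (ne_of_gt hBC)]
        ring
      rw [hbr]
      have hlt : 1 - 1/(Q * FC / (FA * FB)) ≤ Real.log (Q * FC / (FA * FB)) := by
        have h2 := Real.log_le_sub_one_of_pos (show (0:ℝ) < 1/(Q * FC / (FA * FB)) by positivity)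
        rw [Real.log_div one_ne_zero (ne_of_gt ht), Real.log_one] at h2
        linarith
      have h5 : Q - FA * FB / FC ≤ Q * Real.log (Q * FC / (FA * FB)) := by
        have h6 : Q * (1 - 1/(Q * FC / (FA * FB))) = Q - FA * FB / FC := by
          field_simp
        calc Q - FA * FB / FC = Q * (1 - 1/(Q * FC / (FA * FB))) := h6.symm
          _ ≤ Q * Real.log (Q * FC / (FA * FB)) :=
              mul_le_mul_of_nonneg_left hlt (le_of_lt hq)
      calc (Q - FA * FB / FC) / Real.log 2
          ≤ (Q * Real.log (Q * FC / (FA * FB))) / Real.log 2 := by gcongr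
        _ = Q * (Real.log (Q * FC / (FA * FB)) / Real.log 2) := by ring
  calc (0:ℝ) = ((∑ a : α, ∑ b : β, ∑ c : γ, pr p (fun ω => (A ω, B ω, C ω)) (a, b, c))
        - (∑ a : α, ∑ b : β, ∑ c : γ, pr p (fun ω => (A ω, C ω)) (a, c)
            * pr p (fun ω => (B ω, C ω)) (b, c) / pr p C c)) / Real.log 2 := by
        have hs1 : ∑ a : α, ∑ b : β, ∑ c : γ, pr p (fun ω => (A ω, B ω, C ω)) (a, b, c) = 1 := by
          have h2 := sum_pr' p (fun ω => (A ω, B ω, C ω))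
          rw [h1] at h2
          rw [← h2, Fintype.sum_prod_type]
          exact Finset.sum_congr rfl fun a _ => by rw [Fintype.sum_prod_type]
        have hs2 : ∑ a : α, ∑ b : β, ∑ c : γ, pr p (fun ω => (A ω, C ω)) (a, c)
            * pr p (fun ω => (B ω, C ω)) (b, c) / pr p C c = 1 := by
          have hc : ∀ c, ∑ a : α, ∑ b : β, pr p (fun ω => (A ω, C ω)) (a, c)
              * pr p (fun ω => (B ω, C ω)) (b, c) / pr p C c = pr p C c := by
            intro c
            have h3 : ∑ a : α, ∑ b : β, pr p (fun ω => (A ω, C ω)) (a, c)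
                * pr p (fun ω => (B ω, C ω)) (b, c) / pr p C c
                = (∑ a : α, pr p (fun ω => (A ω, C ω)) (a, c))
                  * (∑ b : β, pr p (fun ω => (B ω, C ω)) (b, c)) / pr p C c := by
              rw [Finset.sum_mul, Finset.sum_div]
              refine Finset.sum_congr rfl fun a _ => ?_
              rw [Finset.mul_sum, Finset.sum_div]
            rw [h3, show (∑ a : α, pr p (fun ω => (A ω, C ω)) (a, c)) = pr p C c
                from (pr_pair_snd p A C c).symm,
              show (∑ b : β, pr p (fun ω => (B ω, C ω)) (b, c)) = pr p C c
                from (pr_pair_snd p B C c).symm]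
            rcases eq_or_ne (pr p C c) 0 with h4 | h4
            · rw [h4]; simp
            · field_simp
          calc ∑ a : α, ∑ b : β, ∑ c : γ, pr p (fun ω => (A ω, C ω)) (a, c)
                * pr p (fun ω => (B ω, C ω)) (b, c) / pr p C c
              = ∑ a : α, ∑ c : γ, ∑ b : β, pr p (fun ω => (A ω, C ω)) (a, c)
                * pr p (fun ω => (B ω, C ω)) (b, c) / pr p C c :=
                Finset.sum_congr rfl fun a _ => Finset.sum_comm
            _ = ∑ c : γ, ∑ a : α, ∑ b : β, pr p (fun ω => (A ω, C ω)) (a, c)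
                * pr p (fun ω => (B ω, C ω)) (b, c) / pr p C c := Finset.sum_comm
            _ = ∑ c : γ, pr p C c := Finset.sum_congr rfl fun c _ => hc c
            _ = 1 := by have h5 := sum_pr' p C; rw [h1] at h5; exact h5
        rw [hs1, hs2, sub_self, zero_div]
    _ = ∑ a : α, ∑ b : β, ∑ c : γ, (pr p (fun ω => (A ω, B ω, C ω)) (a, b, c)
          - pr p (fun ω => (A ω, C ω)) (a, c) * pr p (fun ω => (B ω, C ω)) (b, c) / pr p C c)
          / Real.log 2 := by
        rw [← Finset.sum_sub_distrib, Finset.sum_div]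
        refine Finset.sum_congr rfl fun a _ => ?_
        rw [← Finset.sum_sub_distrib, Finset.sum_div]
        refine Finset.sum_congr rfl fun b _ => ?_
        rw [← Finset.sum_sub_distrib, Finset.sum_div]
    _ ≤ _ := Finset.sum_le_sum fun a _ => Finset.sum_le_sum fun b _ =>
        Finset.sum_le_sum fun c _ => key a b c

end Core

section Chain
variable {Ω : Type*} [Fintype Ω]
variable {α β γ δ τ : Type*} [DecidableEq α] [DecidableEq β] [DecidableEq γ] [DecidableEq δ]
variable (p : Ω → ℝ)

lemma cmi_chain [Fintype α] [Fintype β] [Fintype γ] [Fintype δ]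
    (A : Ω → α) (B : Ω → β) (C : Ω → γ) (D : Ω → δ) :
    cmi p (fun ω => (A ω, B ω)) C D
      = cmi p A C D + cmi p B C (fun ω => (D ω, A ω)) := by
  have r1 : ent p (fun ω => (B ω, (D ω, A ω))) = ent p (fun ω => ((A ω, B ω), D ω)) :=
    ent_congr p (fun x => (x.1.2, (x.2, x.1.1))) (fun y => ((y.2.2, y.1), y.2.1))
      (fun _ => rfl) _ _ (fun ω => rfl)
  have r2 : ent p (fun ω => (C ω, (D ω, A ω))) = ent p (fun ω => (A ω, C ω, D ω)) :=
    ent_congr p (fun x => (x.2.1, (x.2.2, x.1))) (fun y => (y.2.2, (y.1, y.2.1)))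
      (fun _ => rfl) _ _ (fun ω => rfl)
  have r3 : ent p (fun ω => (B ω, C ω, (D ω, A ω))) = ent p (fun ω => ((A ω, B ω), C ω, D ω)) :=
    ent_congr p (fun x => (x.1.2, (x.2.1, (x.2.2, x.1.1)))) (fun y => ((y.2.2.2, y.1), (y.2.1, y.2.2.1)))
      (fun _ => rfl) _ _ (fun ω => rfl)
  have r4 : ent p (fun ω => (D ω, A ω)) = ent p (fun ω => (A ω, D ω)) :=
    ent_congr p (fun x => (x.2, x.1)) (fun y => (y.2, y.1)) (fun _ => rfl) _ _ (fun ω => rfl)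
  have r5 : ent p (fun ω => (A ω, C ω, D ω)) = ent p (fun ω => ((A ω, C ω), D ω)) :=
    ent_congr p (fun x => (x.1.1, (x.1.2, x.2))) (fun y => ((y.1, y.2.1), y.2.2))
      (fun _ => rfl) _ _ (fun ω => rfl)
  unfold cmi
  rw [r1, r2, r3, r4]
  ring

lemma ent_unit (h1 : ∑ ω : Ω, p ω = 1) : ent p (fun _ : Ω => (() : Unit)) = 0 := by
  unfold ent pr
  simp [h1]

lemma ent_eq_mi_add_cent [Fintype α] [Fintype β] (A : Ω → α) (B : Ω → β) :
    ent p A = mi p A B + cent p A B := by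
  unfold mi cent; ring

lemma mi_chain [Fintype α] [Fintype β] [Fintype γ] (A : Ω → α) (B : Ω → β) (C : Ω → γ) :
    mi p A (fun ω => (B ω, C ω)) = mi p A B + cmi p A C B := by
  have r1 : ent p (fun ω => (B ω, C ω)) = ent p (fun ω => (C ω, B ω)) :=
    ent_congr p (fun x => (x.2, x.1)) (fun y => (y.2, y.1)) (fun _ => rfl) _ _ (fun ω => rfl)
  have r2 : ent p (fun ω => (A ω, (B ω, C ω))) = ent p (fun ω => (A ω, C ω, B ω)) :=
    ent_congr p (fun x => (x.1, (x.2.2, x.2.1))) (fun y => (y.1, (y.2.2, y.2.1)))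
      (fun _ => rfl) _ _ (fun ω => rfl)
  unfold mi cmi
  rw [r1, r2]
  ring

lemma cmi_unit [Fintype α] [Fintype β] (h1 : ∑ ω : Ω, p ω = 1) (A : Ω → α) (B : Ω → β) :
    cmi p A B (fun _ => (() : Unit)) = mi p A B := by
  have r1 : ent p (fun ω => (A ω, (() : Unit))) = ent p A :=
    ent_congr p (fun x => (x, ())) (fun y => y.1) (fun _ => rfl) _ _ (fun ω => rfl)
  have r2 : ent p (fun ω => (B ω, (() : Unit))) = ent p B :=
    ent_congr p (fun x => (x, ())) (fun y => y.1) (fun _ => rfl) _ _ (fun ω => rfl)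
  have r3 : ent p (fun ω => (A ω, B ω, (() : Unit))) = ent p (fun ω => (A ω, B ω)) :=
    ent_congr p (fun x => (x.1, (x.2, ()))) (fun y => (y.1, y.2.1)) (fun _ => rfl) _ _ (fun ω => rfl)
  unfold cmi mi
  rw [r1, r2, r3, ent_unit p h1]
  ring

lemma mi_eq_zero_of_indep [Fintype α] [Fintype β]
    (h0 : ∀ ω, 0 ≤ p ω) (h1 : ∑ ω : Ω, p ω = 1) (A : Ω → α) (B : Ω → β)
    (h : ∀ a b, pr p (fun ω => (A ω, B ω)) (a, b) = pr p A a * pr p B b) :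
    mi p A B = 0 := by
  rw [← cmi_unit p h1 A B]
  apply cmi_eq_zero_of_factor p A B _ h0
  intro a b c
  have hC : pr p (fun _ : Ω => (() : Unit)) () = 1 := by
    unfold pr; simp [h1]
  have e1 : pr p (fun ω => (A ω, B ω, (() : Unit))) (a, b, ()) = pr p (fun ω => (A ω, B ω)) (a, b) := by
    have := pr_comp_eq p (g := fun x : α × β => (x.1, x.2, ()))
      (fun x y hxy => by simpa [Prod.ext_iff] using hxy) (fun ω => (A ω, B ω)) (a, b)
    simpa using this
  have e2 : pr p (fun ω => (A ω, (() : Unit))) (a, ()) = pr p A a := by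
    have := pr_comp_eq p (g := fun x : α => (x, ()))
      (fun x y hxy => by simpa [Prod.ext_iff] using hxy) A a
    simpa using this
  have e3 : pr p (fun ω => (B ω, (() : Unit))) (b, ()) = pr p B b := by
    have := pr_comp_eq p (g := fun x : β => (x, ()))
      (fun x y hxy => by simpa [Prod.ext_iff] using hxy) B b
    simpa using this
  match c with
  | () => rw [hC, e1, e2, e3, h a b, mul_one]

lemma cmi_eq_zero_of_markov [Fintype τ] [DecidableEq τ] [Fintype α] [Fintype β] [Fintype γ]
    (h0 : ∀ ω, 0 ≤ p ω) (T : Ω → τ) (a : τ → α) (b : τ → β) (c : τ → γ)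
    (A : Ω → α) (B : Ω → β) (C : Ω → γ)
    (hA : ∀ ω, A ω = a (T ω)) (hB : ∀ ω, B ω = b (T ω)) (hC : ∀ ω, C ω = c (T ω))
    (hinj : ∀ u v : τ, a u = a v → b u = b v → c u = c v → u = v)
    (hrect : ∀ (u : τ) (b₀ : β), ∃ v : τ, a v = a u ∧ b v = b₀ ∧ c v = c u)
    (φ : α × γ → ℝ) (ψ : β × γ → ℝ)
    (hfact : ∀ u, pr p T u = φ (a u, c u) * ψ (b u, c u)) :
    cmi p A B C = 0 := by
  classical
  set d : α → γ → ℝ := fun a₀ c₀ => if ∃ u, a u = a₀ ∧ c u = c₀ then 1 else 0 with hd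
  have claim1 : ∀ a₀ b₀ c₀, pr p (fun ω => (A ω, B ω, C ω)) (a₀, b₀, c₀)
      = d a₀ c₀ * (φ (a₀, c₀) * ψ (b₀, c₀)) := by
    intro a₀ b₀ c₀
    have hfun : (fun ω => (A ω, B ω, C ω)) = fun ω => (fun u => (a u, b u, c u)) (T ω) :=
      funext fun ω => by rw [hA, hB, hC]
    rw [hfun, pr_comp p (fun u => (a u, b u, c u)) T (a₀, b₀, c₀)]
    by_cases hex : ∃ u, a u = a₀ ∧ c u = c₀
    · obtain ⟨u₀, hu₀a, hu₀c⟩ := hex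
      obtain ⟨v, hva, hvb, hvc⟩ := hrect u₀ b₀
      have hveq : (a v, b v, c v) = (a₀, b₀, c₀) := by
        rw [hva, hvb, hvc, hu₀a, hu₀c]
      rw [Finset.sum_eq_single v]
      · rw [if_pos hveq, hfact v, hva, hvb, hvc, hu₀a, hu₀c]
        have : d a₀ c₀ = 1 := by rw [hd]; simp only; rw [if_pos ⟨u₀, hu₀a, hu₀c⟩]
        rw [this, one_mul]
      · intro u _ hu
        rw [if_neg]
        intro huv
        apply hu
        apply hinj u v
        · rw [hva, hu₀a]; exact congrArg Prod.fst huv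
        · rw [hvb]; exact congrArg (Prod.fst ∘ Prod.snd) huv
        · rw [hvc, hu₀c]; exact congrArg (Prod.snd ∘ Prod.snd) huv
      · intro hv; exact absurd (Finset.mem_univ v) hv
    · have hz : ∀ u : τ, (if (a u, b u, c u) = (a₀, b₀, c₀) then pr p T u else 0) = 0 := by
        intro u
        rw [if_neg]
        intro huv
        exact hex ⟨u, congrArg Prod.fst huv, congrArg (Prod.snd ∘ Prod.snd) huv⟩
      rw [Finset.sum_eq_zero (fun u _ => hz u)]
      have : d a₀ c₀ = 0 := by rw [hd]; simp only; rw [if_neg hex]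
      rw [this, zero_mul]
  apply cmi_eq_zero_of_factor p A B C h0
  intro a₀ b₀ c₀
  have claim2 : pr p (fun ω => (A ω, C ω)) (a₀, c₀)
      = d a₀ c₀ * (φ (a₀, c₀) * ∑ b₀ : β, ψ (b₀, c₀)) := by
    rw [pr_triple_b p A B C a₀ c₀]
    rw [Finset.sum_congr rfl (fun b₀ _ => claim1 a₀ b₀ c₀)]
    rw [← Finset.mul_sum, ← Finset.mul_sum]
  have claim3 : pr p (fun ω => (B ω, C ω)) (b₀, c₀)
      = (∑ a₀ : α, d a₀ c₀ * φ (a₀, c₀)) * ψ (b₀, c₀) := by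
    rw [pr_triple_a p A B C b₀ c₀]
    rw [Finset.sum_congr rfl (fun a₀ _ => claim1 a₀ b₀ c₀)]
    rw [Finset.sum_mul]
    exact Finset.sum_congr rfl fun a₀ _ => by ring
  have claim4 : pr p C c₀
      = (∑ a₀ : α, d a₀ c₀ * φ (a₀, c₀)) * (∑ b₀ : β, ψ (b₀, c₀)) := by
    rw [pr_triple_c p A B C c₀]
    rw [Finset.sum_congr rfl (fun a₀ _ => Finset.sum_congr rfl (fun b₀ _ => claim1 a₀ b₀ c₀))]
    rw [Finset.sum_mul]
    refine Finset.sum_congr rfl fun a₀ _ => ?_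
    rw [← Finset.mul_sum, ← Finset.mul_sum]
    ring
  rw [claim1, claim2, claim3, claim4]
  ring

end Chain
def recon {n : ℕ} {𝒮 : Type*} (j : Fin n) (sj : 𝒮) (l : {i : Fin n // i < j} → 𝒮)
    (r : {i : Fin n // j < i} → 𝒮) : Fin n → 𝒮 :=
  fun i => if h : i < j then l ⟨i, h⟩ else if h' : j < i then r ⟨i, h'⟩ else sj

lemma recon_spec {n : ℕ} {𝒮 : Type*} (j : Fin n) (s : Fin n → 𝒮) :
    recon j (s j) (fun i => s i.1) (fun i => s i.1) = s := by
  funext i; unfold recon; split_ifs with h h'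
  · rfl
  · rfl
  · rw [show i = j from le_antisymm (not_lt.mp h') (not_lt.mp h)]

lemma prod_fin_partition {n : ℕ} (j : Fin n) (F : Fin n → ℝ) :
    ∏ i, F i = ((∏ i : {i : Fin n // i.1 < j.1}, F i.1) * F j)
      * ∏ i : {i : Fin n // j.1 < i.1}, F i.1 := by
  have h1 : ∏ i : {i : Fin n // i.1 < j.1}, F i.1
      = ∏ i ∈ Finset.univ.filter (fun i : Fin n => i.1 < j.1), F i :=
    (Finset.prod_subtype _ (by simp) F).symm
  have h2 : ∏ i : {i : Fin n // j.1 < i.1}, F i.1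
      = ∏ i ∈ Finset.univ.filter (fun i : Fin n => j.1 < i.1), F i :=
    (Finset.prod_subtype _ (by simp) F).symm
  have h3 : Finset.univ.filter (fun i : Fin n => ¬ i.1 < j.1)
      = insert j (Finset.univ.filter (fun i : Fin n => j.1 < i.1)) := by
    ext i; simp [Fin.ext_iff]; omega
  rw [h1, h2, ← Finset.prod_filter_mul_prod_filter_not Finset.univ (fun i : Fin n => i.1 < j.1) F,
    h3, Finset.prod_insert (by simp), mul_assoc]


section More
variable {Ω : Type*} [Fintype Ω]
variable {α β γ δ : Type*} [DecidableEq α] [DecidableEq β] [DecidableEq γ] [DecidableEq δ]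
variable (p : Ω → ℝ)

lemma mi_congr_right [Fintype α] [Fintype β] [Fintype γ]
    (g : β → γ) (g' : γ → β) (hg : ∀ b, g' (g b) = b)
    (A : Ω → α) (B : Ω → β) (B' : Ω → γ) (hB' : ∀ ω, B' ω = g (B ω)) :
    mi p A B' = mi p A B := by
  unfold mi
  rw [ent_congr p g g' hg B B' hB',
    ent_congr p (fun x : α × β => (x.1, g x.2)) (fun y => (y.1, g' y.2))
      (fun x => by simp only [hg]) (fun ω => (A ω, B ω)) (fun ω => (A ω, B' ω))
      (fun ω => by simp only [hB'])]

lemma cmi_congr_fst {α' : Type*} [Fintype α] [Fintype γ] [Fintype δ] [Fintype α'] [DecidableEq α']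
    (g : α → α') (g' : α' → α) (hg : ∀ x, g' (g x) = x)
    (A : Ω → α) (A' : Ω → α') (C : Ω → γ) (D : Ω → δ) (hA' : ∀ ω, A' ω = g (A ω)) :
    cmi p A' C D = cmi p A C D := by
  unfold cmi
  rw [ent_congr p (fun x : α × δ => (g x.1, x.2)) (fun y => (g' y.1, y.2))
      (fun x => by simp only [hg]) (fun ω => (A ω, D ω)) (fun ω => (A' ω, D ω))
      (fun ω => by simp only [hA']),
    ent_congr p (fun x : α × γ × δ => (g x.1, x.2)) (fun y => (g' y.1, y.2))
      (fun x => by simp only [hg]) (fun ω => (A ω, C ω, D ω)) (fun ω => (A' ω, C ω, D ω))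
      (fun ω => by simp only [hA'])]

end More

/-- Auxiliary telescoping quantity `H(W1, W2, S^n, Y^{<k}) - H(W2, S^n, Y^{<k})`. -/
noncomputable def Gaux {Ω 𝒲₂ 𝒮 𝒴 : Type*} [Fintype Ω] [Fintype 𝒲₂] [DecidableEq 𝒲₂]
    [Fintype 𝒮] [DecidableEq 𝒮] [Fintype 𝒴] [DecidableEq 𝒴] {n M1 : ℕ}
    (p : Ω → ℝ) (W1 : Ω → Fin M1) (W2 : Ω → 𝒲₂) (S : Fin n → Ω → 𝒮) (Y : Fin n → Ω → 𝒴)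
    (k : ℕ) : ℝ :=
  ent p (fun ω => (W1 ω, (W2 ω, fun i => S i ω), fun i : {i : Fin n // i.1 < k} => Y i.1 ω))
    - ent p (fun ω => ((W2 ω, fun i => S i ω), fun i : {i : Fin n // i.1 < k} => Y i.1 ω))


/-- converse bound on R1 for the degraded BC with host recovery:
H(W1) ≤ Σ_j I(X_j ; Y_j | S_j, U_j) + n·ε_n with U_j = (W2, S^{j−1}, S_{j+1}^n). -/
theorem bc_R1_converse
    {Ω 𝒲₂ 𝒮 𝒳 𝒴 : Type*} [Fintype Ω]
    [Fintype 𝒲₂] [DecidableEq 𝒲₂] [Fintype 𝒮] [DecidableEq 𝒮]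
    [Fintype 𝒳] [DecidableEq 𝒳] [Fintype 𝒴] [DecidableEq 𝒴]
    (p : Ω → ℝ) (hp : IsPMF p) (n M1 : ℕ) (hn : 0 < n) (hM1 : 0 < M1)
    (W1 : Ω → Fin M1) (W2 : Ω → 𝒲₂)
    (S : Fin n → Ω → 𝒮) (X : Fin n → Ω → 𝒳) (Y : Fin n → Ω → 𝒴)
    (hunif : ∀ w, pr p W1 w = 1 / M1)
    (hindep : ∀ (a : Fin M1) (b : 𝒲₂) (s : Fin n → 𝒮),
      pr p (fun ω => (W1 ω, W2 ω, fun j => S j ω)) (a, b, s)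
        = pr p W1 a * pr p W2 b * pr p (fun ω => fun j => S j ω) s)
    (hiid : ∃ q : 𝒮 → ℝ, ∀ s : Fin n → 𝒮,
      pr p (fun ω => fun j => S j ω) s = ∏ j, q (s j))
    (henc : ∃ f : Fin M1 → 𝒲₂ → (Fin n → 𝒮) → Fin n → 𝒳,
      ∀ ω j, X j ω = f (W1 ω) (W2 ω) (fun i => S i ω) j)
    (hmem : ∃ ch : 𝒴 → 𝒳 × 𝒮 → ℝ,
      ∀ (a : Fin M1) (b : 𝒲₂) (s : Fin n → 𝒮) (x : Fin n → 𝒳) (y : Fin n → 𝒴),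
        pr p (fun ω => (W1 ω, W2 ω, (fun j => S j ω), (fun j => X j ω),
            (fun j => Y j ω))) (a, b, s, x, y)
          = pr p (fun ω => (W1 ω, W2 ω, (fun j => S j ω), (fun j => X j ω)))
              (a, b, s, x) * ∏ j, ch (y j) (x j, s j))
    (εn : ℝ)
    (hFano : cent p W1 (fun ω => (W2 ω, (fun j => S j ω), (fun j => Y j ω)))
        ≤ (n : ℝ) * εn) :
    ent p W1
      ≤ (∑ j : Fin n, cmi p (X j) (Y j)
          (fun ω => (S j ω, W2 ω, (fun i : {i : Fin n // i < j} => S i.1 ω),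
            (fun i : {i : Fin n // j < i} => S i.1 ω))))
        + (n : ℝ) * εn := by
  obtain ⟨hp0, hp1⟩ := hp
  obtain ⟨f, hf⟩ := henc
  obtain ⟨ch, hch⟩ := hmem
  -- marginal independence of W2 and S^n
  have hZmarg : ∀ b s, pr p (fun ω => (W2 ω, fun i => S i ω)) (b, s)
      = pr p W2 b * pr p (fun ω => fun i => S i ω) s := by
    intro b s
    rw [pr_pair_snd p W1 (fun ω => (W2 ω, fun i => S i ω)) (b, s)]
    rw [Finset.sum_congr rfl (fun a _ => hindep a b s)]
    rw [← Finset.sum_mul, ← Finset.sum_mul, sum_pr' p W1, hp1, one_mul]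
  -- Step 1: split entropy
  have step1 : ent p W1
      = mi p W1 (fun ω => (W2 ω, (fun j => S j ω), (fun j => Y j ω)))
        + cent p W1 (fun ω => (W2 ω, (fun j => S j ω), (fun j => Y j ω))) :=
    ent_eq_mi_add_cent p W1 _
  -- Step 2: regroup
  have step2 : mi p W1 (fun ω => (W2 ω, (fun j => S j ω), (fun j => Y j ω)))
      = mi p W1 (fun ω => ((W2 ω, fun i => S i ω), fun i => Y i ω)) :=
    mi_congr_right p
      (fun x : (𝒲₂ × (Fin n → 𝒮)) × (Fin n → 𝒴) => (x.1.1, x.1.2, x.2))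
      (fun y => ((y.1, y.2.1), y.2.2)) (fun x => rfl) W1
      (fun ω => ((W2 ω, fun i => S i ω), fun i => Y i ω)) _ (fun ω => rfl)
  -- Step 3: chain rule
  have step3 := mi_chain p W1 (fun ω => (W2 ω, fun i => S i ω)) (fun ω => fun i => Y i ω)
  -- Step 4: independence
  have step4 : mi p W1 (fun ω => (W2 ω, fun i => S i ω)) = 0 := by
    apply mi_eq_zero_of_indep p hp0 hp1 W1 _
    rintro a ⟨b, s⟩
    rw [hindep a b s, hZmarg b s, mul_assoc]
  -- Step 5: cmi as telescoping difference
  have step5 : cmi p W1 (fun ω => fun i => Y i ω) (fun ω => (W2 ω, fun i => S i ω))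
      = Gaux p W1 W2 S Y 0 - Gaux p W1 W2 S Y n := by
    have hg0a : ent p (fun ω => (W1 ω, (W2 ω, fun i => S i ω),
          fun i : {i : Fin n // i.1 < 0} => Y i.1 ω))
        = ent p (fun ω => (W1 ω, (W2 ω, fun i => S i ω))) :=
      ent_congr p
        (fun x : Fin M1 × (𝒲₂ × (Fin n → 𝒮)) =>
          (x.1, x.2, fun i : {i : Fin n // i.1 < 0} => (absurd i.2 (Nat.not_lt_zero i.1.1) : 𝒴)))
        (fun y => (y.1, y.2.1)) (fun x => rfl) _ _
        (fun ω => by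
          have he : (fun i : {i : Fin n // i.1 < 0} => Y i.1 ω)
              = (fun i : {i : Fin n // i.1 < 0} => (absurd i.2 (Nat.not_lt_zero i.1.1) : 𝒴)) :=
            funext fun i => absurd i.2 (Nat.not_lt_zero i.1.1)
          rw [he])
    have hg0b : ent p (fun ω => ((W2 ω, fun i => S i ω),
          fun i : {i : Fin n // i.1 < 0} => Y i.1 ω))
        = ent p (fun ω => (W2 ω, fun i => S i ω)) :=
      ent_congr p
        (fun x : 𝒲₂ × (Fin n → 𝒮) =>
          (x, fun i : {i : Fin n // i.1 < 0} => (absurd i.2 (Nat.not_lt_zero i.1.1) : 𝒴)))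
        (fun y => y.1) (fun x => rfl) _ _
        (fun ω => by
          have he : (fun i : {i : Fin n // i.1 < 0} => Y i.1 ω)
              = (fun i : {i : Fin n // i.1 < 0} => (absurd i.2 (Nat.not_lt_zero i.1.1) : 𝒴)) :=
            funext fun i => absurd i.2 (Nat.not_lt_zero i.1.1)
          rw [he])
    have hgna : ent p (fun ω => (W1 ω, (W2 ω, fun i => S i ω),
          fun i : {i : Fin n // i.1 < n} => Y i.1 ω))
        = ent p (fun ω => (W1 ω, (W2 ω, fun i => S i ω), fun i => Y i ω)) :=
      ent_congr p
        (fun x : Fin M1 × ((𝒲₂ × (Fin n → 𝒮)) × (Fin n → 𝒴)) =>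
          (x.1, x.2.1, fun i : {i : Fin n // i.1 < n} => x.2.2 i.1))
        (fun y => (y.1, y.2.1, fun i : Fin n => y.2.2 ⟨i, i.isLt⟩))
        (fun x => rfl) _ _ (fun ω => rfl)
    have hgnb : ent p (fun ω => ((W2 ω, fun i => S i ω),
          fun i : {i : Fin n // i.1 < n} => Y i.1 ω))
        = ent p (fun ω => ((W2 ω, fun i => S i ω), fun i => Y i ω)) :=
      ent_congr p
        (fun x : (𝒲₂ × (Fin n → 𝒮)) × (Fin n → 𝒴) =>
          (x.1, fun i : {i : Fin n // i.1 < n} => x.2 i.1))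
        (fun y => (y.1, fun i : Fin n => y.2 ⟨i, i.isLt⟩))
        (fun x => rfl) _ _ (fun ω => rfl)
    have sw1 : ent p (fun ω => ((fun i => Y i ω), (W2 ω, fun i => S i ω)))
        = ent p (fun ω => ((W2 ω, fun i => S i ω), fun i => Y i ω)) :=
      ent_congr p (fun x : (𝒲₂ × (Fin n → 𝒮)) × (Fin n → 𝒴) => (x.2, x.1))
        (fun y => (y.2, y.1)) (fun x => rfl) _ _ (fun ω => rfl)
    have sw2 : ent p (fun ω => (W1 ω, (fun i => Y i ω), (W2 ω, fun i => S i ω)))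
        = ent p (fun ω => (W1 ω, (W2 ω, fun i => S i ω), fun i => Y i ω)) :=
      ent_congr p
        (fun x : Fin M1 × ((𝒲₂ × (Fin n → 𝒮)) × (Fin n → 𝒴)) => (x.1, x.2.2, x.2.1))
        (fun y => (y.1, y.2.2, y.2.1)) (fun x => rfl) _ _ (fun ω => rfl)
    unfold cmi Gaux
    rw [hg0a, hg0b, hgna, hgnb, sw1, sw2]
    ring
  have mival : mi p W1 (fun ω => (W2 ω, (fun j => S j ω), (fun j => Y j ω)))
      = Gaux p W1 W2 S Y 0 - Gaux p W1 W2 S Y n := by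
    rw [step2, step3, step4, zero_add, step5]
  have tele : Gaux p W1 W2 S Y 0 - Gaux p W1 W2 S Y n
      = ∑ j : Fin n, (Gaux p W1 W2 S Y j.1 - Gaux p W1 W2 S Y (j.1 + 1)) :=
    (Finset.sum_range_sub' (Gaux p W1 W2 S Y) n).symm.trans
      (Fin.sum_univ_eq_sum_range (fun k => Gaux p W1 W2 S Y k - Gaux p W1 W2 S Y (k + 1)) n).symm
  have perj : ∀ j : Fin n, Gaux p W1 W2 S Y j.1 - Gaux p W1 W2 S Y (j.1 + 1)
      ≤ cmi p (X j) (Y j)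
          (fun ω => (S j ω, W2 ω, (fun i : {i : Fin n // i < j} => S i.1 ω),
            (fun i : {i : Fin n // j < i} => S i.1 ω))) := by
    intro j
    -- (a) the telescoping difference is a conditional mutual information
    have ea1 : ent p (fun ω => (Y j ω, ((W2 ω, fun i => S i ω),
          fun i : {i : Fin n // i.1 < j.1} => Y i.1 ω)))
        = ent p (fun ω => ((W2 ω, fun i => S i ω),
          fun i : {i : Fin n // i.1 < j.1 + 1} => Y i.1 ω)) :=
      ent_congr p
        (fun x : (𝒲₂ × (Fin n → 𝒮)) × ({i : Fin n // i.1 < j.1 + 1} → 𝒴) =>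
          (x.2 ⟨j, Nat.lt_succ_self j.1⟩,
            (x.1, fun i : {i : Fin n // i.1 < j.1} => x.2 ⟨i.1, Nat.lt_succ_of_lt i.2⟩)))
        (fun y => (y.2.1, fun i : {i : Fin n // i.1 < j.1 + 1} =>
          if h : i.1.1 < j.1 then y.2.2 ⟨i.1, h⟩ else y.1))
        (fun x => by
          obtain ⟨z, q⟩ := x
          beta_reduce
          congr 1
          funext i
          by_cases h : i.1.1 < j.1
          · rw [dif_pos h]
          · rw [dif_neg h]
            exact congrArg q (Subtype.ext (Fin.ext
              (Nat.le_antisymm (Nat.le_of_not_lt h) (Nat.lt_succ_iff.mp i.2)))))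
        _ _ (fun ω => rfl)
    have ea2 : ent p (fun ω => (W1 ω, Y j ω, ((W2 ω, fun i => S i ω),
          fun i : {i : Fin n // i.1 < j.1} => Y i.1 ω)))
        = ent p (fun ω => (W1 ω, (W2 ω, fun i => S i ω),
          fun i : {i : Fin n // i.1 < j.1 + 1} => Y i.1 ω)) :=
      ent_congr p
        (fun x : Fin M1 × ((𝒲₂ × (Fin n → 𝒮)) × ({i : Fin n // i.1 < j.1 + 1} → 𝒴)) =>
          (x.1, x.2.2 ⟨j, Nat.lt_succ_self j.1⟩,
            (x.2.1, fun i : {i : Fin n // i.1 < j.1} => x.2.2 ⟨i.1, Nat.lt_succ_of_lt i.2⟩)))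
        (fun y => (y.1, (y.2.2.1, fun i : {i : Fin n // i.1 < j.1 + 1} =>
          if h : i.1.1 < j.1 then y.2.2.2 ⟨i.1, h⟩ else y.2.1)))
        (fun x => by
          obtain ⟨w, z, q⟩ := x
          beta_reduce
          congr 1
          congr 1
          funext i
          by_cases h : i.1.1 < j.1
          · rw [dif_pos h]
          · rw [dif_neg h]
            exact congrArg q (Subtype.ext (Fin.ext
              (Nat.le_antisymm (Nat.le_of_not_lt h) (Nat.lt_succ_iff.mp i.2)))))
        _ _ (fun ω => rfl)
    have stepa : Gaux p W1 W2 S Y j.1 - Gaux p W1 W2 S Y (j.1 + 1)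
        = cmi p W1 (Y j) (fun ω => ((W2 ω, fun i => S i ω),
            fun i : {i : Fin n // i.1 < j.1} => Y i.1 ω)) := by
      unfold Gaux cmi
      rw [ea1, ea2]
      ring
    -- (b) condition on less
    have hb := cmi_chain p (fun ω => fun i : {i : Fin n // i.1 < j.1} => Y i.1 ω) W1
      (Y j) (fun ω => (W2 ω, fun i => S i ω))
    have hbn := cmi_nonneg p (fun ω => fun i : {i : Fin n // i.1 < j.1} => Y i.1 ω)
      (Y j) (fun ω => (W2 ω, fun i => S i ω)) ⟨hp0, hp1⟩
    -- (c) add the future outputs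
    have hc := cmi_chain p
      (fun ω => ((fun i : {i : Fin n // i.1 < j.1} => Y i.1 ω), W1 ω))
      (fun ω => fun i : {i : Fin n // j.1 < i.1} => Y i.1 ω)
      (Y j) (fun ω => (W2 ω, fun i => S i ω))
    have hcn := cmi_nonneg p
      (fun ω => fun i : {i : Fin n // j.1 < i.1} => Y i.1 ω)
      (Y j)
      (fun ω => ((W2 ω, fun i => S i ω),
        ((fun i : {i : Fin n // i.1 < j.1} => Y i.1 ω), W1 ω))) ⟨hp0, hp1⟩
    -- (d) adjoin the determined pair (X_j, S_j)
    have ed1 : ent p (fun ω =>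
          (((((fun i : {i : Fin n // i.1 < j.1} => Y i.1 ω), W1 ω),
              (fun i : {i : Fin n // j.1 < i.1} => Y i.1 ω)), (X j ω, S j ω)),
            (W2 ω, fun i => S i ω)))
        = ent p (fun ω =>
          ((((fun i : {i : Fin n // i.1 < j.1} => Y i.1 ω), W1 ω),
              (fun i : {i : Fin n // j.1 < i.1} => Y i.1 ω)),
            (W2 ω, fun i => S i ω))) :=
      ent_congr p
        (fun x : ((({i : Fin n // i.1 < j.1} → 𝒴) × Fin M1) × ({i : Fin n // j.1 < i.1} → 𝒴))
            × (𝒲₂ × (Fin n → 𝒮)) =>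
          ((x.1, (f x.1.1.2 x.2.1 x.2.2 j, x.2.2 j)), x.2))
        (fun y => (y.1.1, y.2)) (fun x => rfl) _ _ (fun ω => by rw [hf ω j])
    have ed3 : ent p (fun ω =>
          (((((fun i : {i : Fin n // i.1 < j.1} => Y i.1 ω), W1 ω),
              (fun i : {i : Fin n // j.1 < i.1} => Y i.1 ω)), (X j ω, S j ω)),
            Y j ω, (W2 ω, fun i => S i ω)))
        = ent p (fun ω =>
          ((((fun i : {i : Fin n // i.1 < j.1} => Y i.1 ω), W1 ω),
              (fun i : {i : Fin n // j.1 < i.1} => Y i.1 ω)),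
            Y j ω, (W2 ω, fun i => S i ω))) :=
      ent_congr p
        (fun x : ((({i : Fin n // i.1 < j.1} → 𝒴) × Fin M1) × ({i : Fin n // j.1 < i.1} → 𝒴))
            × (𝒴 × (𝒲₂ × (Fin n → 𝒮))) =>
          ((x.1, (f x.1.1.2 x.2.2.1 x.2.2.2 j, x.2.2.2 j)), x.2))
        (fun y => (y.1.1, y.2)) (fun x => rfl) _ _ (fun ω => by rw [hf ω j])
    have stepd : cmi p (fun ω =>
          ((((fun i : {i : Fin n // i.1 < j.1} => Y i.1 ω), W1 ω),
              (fun i : {i : Fin n // j.1 < i.1} => Y i.1 ω)), (X j ω, S j ω)))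
          (Y j) (fun ω => (W2 ω, fun i => S i ω))
        = cmi p (fun ω =>
          (((fun i : {i : Fin n // i.1 < j.1} => Y i.1 ω), W1 ω),
            (fun i : {i : Fin n // j.1 < i.1} => Y i.1 ω)))
          (Y j) (fun ω => (W2 ω, fun i => S i ω)) := by
      unfold cmi
      rw [ed1, ed3]
    -- (e) swap the pair
    have swp : cmi p (fun ω =>
          ((((fun i : {i : Fin n // i.1 < j.1} => Y i.1 ω), W1 ω),
              (fun i : {i : Fin n // j.1 < i.1} => Y i.1 ω)), (X j ω, S j ω)))
          (Y j) (fun ω => (W2 ω, fun i => S i ω))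
        = cmi p (fun ω =>
          ((X j ω, S j ω),
            (((fun i : {i : Fin n // i.1 < j.1} => Y i.1 ω), W1 ω),
              (fun i : {i : Fin n // j.1 < i.1} => Y i.1 ω))))
          (Y j) (fun ω => (W2 ω, fun i => S i ω)) :=
      cmi_congr_fst p (fun x => (x.2, x.1)) (fun y => (y.2, y.1)) (fun x => rfl)
        (fun ω => ((X j ω, S j ω),
          (((fun i : {i : Fin n // i.1 < j.1} => Y i.1 ω), W1 ω),
            (fun i : {i : Fin n // j.1 < i.1} => Y i.1 ω)))) _ _ _ (fun ω => rfl)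
    have he := cmi_chain p (fun ω => (X j ω, S j ω))
      (fun ω => (((fun i : {i : Fin n // i.1 < j.1} => Y i.1 ω), W1 ω),
        (fun i : {i : Fin n // j.1 < i.1} => Y i.1 ω)))
      (Y j) (fun ω => (W2 ω, fun i => S i ω))
    -- (f) Markov property
    have stepf : cmi p (fun ω =>
          (((fun i : {i : Fin n // i.1 < j.1} => Y i.1 ω), W1 ω),
            (fun i : {i : Fin n // j.1 < i.1} => Y i.1 ω)))
          (Y j) (fun ω => ((W2 ω, fun i => S i ω), (X j ω, S j ω))) = 0 := by
      have joint : ∀ (w1 : Fin M1) (w2 : 𝒲₂) (s : Fin n → 𝒮) (y : Fin n → 𝒴),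
          pr p (fun ω => (W1 ω, W2 ω, (fun i => S i ω), (fun i => Y i ω))) (w1, w2, s, y)
            = pr p (fun ω => (W1 ω, W2 ω, fun i => S i ω)) (w1, w2, s)
              * ∏ i, ch (y i) (f w1 w2 s i, s i) := by
        intro w1 w2 s y
        have j1 : pr p (fun ω => (W1 ω, W2 ω, (fun i => S i ω), (fun i => Y i ω)))
              (w1, w2, s, y)
            = pr p (fun ω => (W1 ω, W2 ω, (fun i => S i ω), (fun i => X i ω),
                (fun i => Y i ω))) (w1, w2, s, f w1 w2 s, y) := by
          unfold pr
          apply Finset.sum_congr rfl; intro ω _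
          apply if_congr _ rfl rfl
          simp only [Prod.mk.injEq]
          constructor
          · rintro ⟨h1, h2, h3, h4⟩
            refine ⟨h1, h2, h3, ?_, h4⟩
            funext i
            rw [hf ω i, h1, h2, h3]
          · rintro ⟨h1, h2, h3, _, h5⟩
            exact ⟨h1, h2, h3, h5⟩
        have j2 : pr p (fun ω => (W1 ω, W2 ω, (fun i => S i ω), (fun i => X i ω)))
              (w1, w2, s, f w1 w2 s)
            = pr p (fun ω => (W1 ω, W2 ω, fun i => S i ω)) (w1, w2, s) := by
          unfold pr
          apply Finset.sum_congr rfl; intro ω _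
          apply if_congr _ rfl rfl
          simp only [Prod.mk.injEq]
          constructor
          · rintro ⟨h1, h2, h3, _⟩
            exact ⟨h1, h2, h3⟩
          · rintro ⟨h1, h2, h3⟩
            refine ⟨h1, h2, h3, ?_⟩
            funext i
            rw [hf ω i, h1, h2, h3]
        rw [j1, hch w1 w2 s (f w1 w2 s) y, j2]
      apply cmi_eq_zero_of_markov p hp0
        (fun ω => (W1 ω, W2 ω, (fun i => S i ω), (fun i => Y i ω)))
        (fun u => (((fun i : {i : Fin n // i.1 < j.1} => u.2.2.2 i.1), u.1),
          (fun i : {i : Fin n // j.1 < i.1} => u.2.2.2 i.1)))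
        (fun u => u.2.2.2 j)
        (fun u => ((u.2.1, u.2.2.1), (f u.1 u.2.1 u.2.2.1 j, u.2.2.1 j)))
        _ _ _ (fun ω => rfl) (fun ω => rfl) (fun ω => by rw [hf ω j])
        ?hinj ?hrect
        (fun ac => pr p (fun ω => (W1 ω, W2 ω, fun i => S i ω)) (ac.1.1.2, ac.2.1.1, ac.2.1.2)
          * ((∏ i : {i : Fin n // i.1 < j.1},
                ch (ac.1.1.1 i) (f ac.1.1.2 ac.2.1.1 ac.2.1.2 i.1, ac.2.1.2 i.1))
            * ∏ i : {i : Fin n // j.1 < i.1},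
                ch (ac.1.2 i) (f ac.1.1.2 ac.2.1.1 ac.2.1.2 i.1, ac.2.1.2 i.1)))
        (fun bc => ch bc.1 bc.2.2)
        ?hfact
      case hinj =>
        intro u v ha hb hcc
        obtain ⟨u1, u2, u3, u4⟩ := u
        obtain ⟨v1, v2, v3, v4⟩ := v
        simp only [Prod.mk.injEq] at ha hb hcc ⊢
        obtain ⟨⟨hyL, hw1⟩, hyR⟩ := ha
        obtain ⟨⟨hw2, hs⟩, -⟩ := hcc
        refine ⟨hw1, hw2, hs, funext fun i => ?_⟩
        rcases Nat.lt_trichotomy i.1 j.1 with h | h | h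
        · exact congrFun hyL ⟨i, h⟩
        · rw [show i = j from Fin.ext h]
          exact hb
        · exact congrFun hyR ⟨i, h⟩
      case hrect =>
        intro u b₀
        obtain ⟨w1, w2, s, y⟩ := u
        refine ⟨(w1, w2, s, fun i => if i = j then b₀ else y i), ?_, ?_, rfl⟩
        · have hL : (fun i : {i : Fin n // i.1 < j.1} => if i.1 = j then b₀ else y i.1)
              = (fun i : {i : Fin n // i.1 < j.1} => y i.1) := by
            funext i
            have hne : i.1 ≠ j := by
              intro h
              have h2 := i.2
              rw [h] at h2
              exact lt_irrefl _ h2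
            rw [if_neg hne]
          have hR : (fun i : {i : Fin n // j.1 < i.1} => if i.1 = j then b₀ else y i.1)
              = (fun i : {i : Fin n // j.1 < i.1} => y i.1) := by
            funext i
            have hne : i.1 ≠ j := by
              intro h
              have h2 := i.2
              rw [h] at h2
              exact lt_irrefl _ h2
            rw [if_neg hne]
          beta_reduce
          rw [hL, hR]
        · simp
      case hfact =>
        intro u
        obtain ⟨w1, w2, s, y⟩ := u
        rw [joint w1 w2 s y, prod_fin_partition j (fun i => ch (y i) (f w1 w2 s i, s i))]
        ring
    -- (g) rewrite the remaining cmi into the statement's form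
    have tg1a : ent p (fun ω => ((X j ω, S j ω), (W2 ω, fun i => S i ω)))
        = ent p (fun ω => (X j ω, (W2 ω, fun i => S i ω))) :=
      ent_congr p (fun x : 𝒳 × (𝒲₂ × (Fin n → 𝒮)) => ((x.1, x.2.2 j), x.2))
        (fun y => (y.1.1, y.2)) (fun x => rfl) _ _ (fun ω => rfl)
    have tg1b : ent p (fun ω => (X j ω, (S j ω, W2 ω,
          (fun i : {i : Fin n // i < j} => S i.1 ω),
          (fun i : {i : Fin n // j < i} => S i.1 ω))))
        = ent p (fun ω => (X j ω, (W2 ω, fun i => S i ω))) :=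
      ent_congr p
        (fun x : 𝒳 × (𝒲₂ × (Fin n → 𝒮)) =>
          (x.1, (x.2.2 j, x.2.1, (fun i : {i : Fin n // i < j} => x.2.2 i.1),
            (fun i : {i : Fin n // j < i} => x.2.2 i.1))))
        (fun y => (y.1, (y.2.2.1, recon j y.2.1 y.2.2.2.1 y.2.2.2.2)))
        (fun x => by
          show (x.1, (x.2.1, recon j (x.2.2 j) (fun i => x.2.2 i.1) (fun i => x.2.2 i.1))) = x
          rw [recon_spec]) _ _ (fun ω => rfl)
    have tg2 : ent p (fun ω => (Y j ω, (S j ω, W2 ω,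
          (fun i : {i : Fin n // i < j} => S i.1 ω),
          (fun i : {i : Fin n // j < i} => S i.1 ω))))
        = ent p (fun ω => (Y j ω, (W2 ω, fun i => S i ω))) :=
      ent_congr p
        (fun x : 𝒴 × (𝒲₂ × (Fin n → 𝒮)) =>
          (x.1, (x.2.2 j, x.2.1, (fun i : {i : Fin n // i < j} => x.2.2 i.1),
            (fun i : {i : Fin n // j < i} => x.2.2 i.1))))
        (fun y => (y.1, (y.2.2.1, recon j y.2.1 y.2.2.2.1 y.2.2.2.2)))
        (fun x => by
          show (x.1, (x.2.1, recon j (x.2.2 j) (fun i => x.2.2 i.1) (fun i => x.2.2 i.1))) = x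
          rw [recon_spec]) _ _ (fun ω => rfl)
    have tg3a : ent p (fun ω => (X j ω, Y j ω, (S j ω, W2 ω,
          (fun i : {i : Fin n // i < j} => S i.1 ω),
          (fun i : {i : Fin n // j < i} => S i.1 ω))))
        = ent p (fun ω => (X j ω, Y j ω, (W2 ω, fun i => S i ω))) :=
      ent_congr p
        (fun x : 𝒳 × (𝒴 × (𝒲₂ × (Fin n → 𝒮))) =>
          (x.1, x.2.1, (x.2.2.2 j, x.2.2.1, (fun i : {i : Fin n // i < j} => x.2.2.2 i.1),
            (fun i : {i : Fin n // j < i} => x.2.2.2 i.1))))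
        (fun y => (y.1, y.2.1, (y.2.2.2.1, recon j y.2.2.1 y.2.2.2.2.1 y.2.2.2.2.2)))
        (fun x => by
          show (x.1, x.2.1, (x.2.2.1,
            recon j (x.2.2.2 j) (fun i => x.2.2.2 i.1) (fun i => x.2.2.2 i.1))) = x
          rw [recon_spec]) _ _ (fun ω => rfl)
    have tg3b : ent p (fun ω => ((X j ω, S j ω), Y j ω, (W2 ω, fun i => S i ω)))
        = ent p (fun ω => (X j ω, Y j ω, (W2 ω, fun i => S i ω))) :=
      ent_congr p
        (fun x : 𝒳 × (𝒴 × (𝒲₂ × (Fin n → 𝒮))) => ((x.1, x.2.2.2 j), x.2))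
        (fun y => (y.1.1, y.2)) (fun x => rfl) _ _ (fun ω => rfl)
    have tg4 : ent p (fun ω => (S j ω, W2 ω,
          (fun i : {i : Fin n // i < j} => S i.1 ω),
          (fun i : {i : Fin n // j < i} => S i.1 ω)))
        = ent p (fun ω => (W2 ω, fun i => S i ω)) :=
      ent_congr p
        (fun z : 𝒲₂ × (Fin n → 𝒮) =>
          (z.2 j, z.1, (fun i : {i : Fin n // i < j} => z.2 i.1),
            (fun i : {i : Fin n // j < i} => z.2 i.1)))
        (fun v => (v.2.1, recon j v.1 v.2.2.1 v.2.2.2))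
        (fun z => by
          show (z.1, recon j (z.2 j) (fun i => z.2 i.1) (fun i => z.2 i.1)) = z
          rw [recon_spec]) _ _ (fun ω => rfl)
    have stepg : cmi p (fun ω => (X j ω, S j ω)) (Y j)
          (fun ω => (W2 ω, fun i => S i ω))
        = cmi p (X j) (Y j)
          (fun ω => (S j ω, W2 ω, (fun i : {i : Fin n // i < j} => S i.1 ω),
            (fun i : {i : Fin n // j < i} => S i.1 ω))) := by
      unfold cmi
      rw [tg1a, tg1b, tg2, tg3a, tg3b, tg4]
    linarith [stepa, hb, hbn, hc, hcn, stepd, swp, he, stepf, stepg]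
  have h2 : Gaux p W1 W2 S Y 0 - Gaux p W1 W2 S Y n
      ≤ ∑ j : Fin n, cmi p (X j) (Y j)
          (fun ω => (S j ω, W2 ω, (fun i : {i : Fin n // i < j} => S i.1 ω),
            (fun i : {i : Fin n // j < i} => S i.1 ω))) := by
    rw [tele]
    exact Finset.sum_le_sum (fun j _ => perj j)
  linarith [step1, mival, hFano, h2]

end IE
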